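/- Let A be a symmetric d×d matrix with |A^D| > R ≥ 0, and let B be symmetric with |B^D| ≤ R. Then (R·Φ(A^D/R) − A^D, (tr(A−B)/d)·E_d + R·Φ(A^D/R) − B^D) = (R − |A^D|)·(R − (A^D, B^D)/|A^D|), and this quantity is ≤ (R − |A^D|)(R − |B^D|) ≤ 0. -/

import Mathlib

open Matrix

variable {d : ℕ}

/-- Frobenius inner product of matrices. -/
def finner (A B : Matrix (Fin d) (Fin d) ℝ) : ℝ := ∑ i, ∑ j, A i j * B i j

/-- Frobenius norm. -/
noncomputable def fnorm (A : Matrix (Fin d) (Fin d) ℝ) : ℝ := Real.sqrt (finner A A)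

/-- Deviatoric part `A - (tr A / d) • E_d`. -/
noncomputable def dev (A : Matrix (Fin d) (Fin d) ℝ) : Matrix (Fin d) (Fin d) ℝ :=
  A - (Matrix.trace A / (d : ℝ)) • (1 : Matrix (Fin d) (Fin d) ℝ)

/-- The truncation map Φ. -/
noncomputable def Phi (A : Matrix (Fin d) (Fin d) ℝ) : Matrix (Fin d) (Fin d) ℝ :=
  if fnorm A ≤ 1 then A else (fnorm A)⁻¹ • A

/-- The projection-type map `P_R`. -/
noncomputable def Pop (R : ℝ) (A : Matrix (Fin d) (Fin d) ℝ) : Matrix (Fin d) (Fin d) ℝ :=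
  if 0 < R then (Matrix.trace A / (d : ℝ)) • (1 : Matrix (Fin d) (Fin d) ℝ) + R • Phi (R⁻¹ • dev A)
  else (Matrix.trace A / (d : ℝ)) • (1 : Matrix (Fin d) (Fin d) ℝ)


lemma finner_self_nonneg (A : Matrix (Fin d) (Fin d) ℝ) : 0 ≤ finner A A := by
  apply Finset.sum_nonneg; intro i _; apply Finset.sum_nonneg; intro j _; exact mul_self_nonneg _

lemma fnorm_sq (A : Matrix (Fin d) (Fin d) ℝ) : fnorm A ^ 2 = finner A A :=
  Real.sq_sqrt (finner_self_nonneg A)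

lemma fnorm_nonneg (A : Matrix (Fin d) (Fin d) ℝ) : 0 ≤ fnorm A := Real.sqrt_nonneg _

lemma finner_smul_left (c : ℝ) (A B : Matrix (Fin d) (Fin d) ℝ) :
    finner (c • A) B = c * finner A B := by
  simp [finner, Finset.mul_sum, mul_assoc]

lemma finner_smul_right (c : ℝ) (A B : Matrix (Fin d) (Fin d) ℝ) :
    finner A (c • B) = c * finner A B := by
  simp only [finner, Matrix.smul_apply, smul_eq_mul, Finset.mul_sum]; congr 1; ext i; congr 1; ext j; ring

lemma finner_sub_left (A B C : Matrix (Fin d) (Fin d) ℝ) :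
    finner (A - B) C = finner A C - finner B C := by
  simp [finner, sub_mul, Finset.sum_sub_distrib]

lemma finner_sub_right (A B C : Matrix (Fin d) (Fin d) ℝ) :
    finner A (B - C) = finner A B - finner A C := by
  simp [finner, mul_sub, Finset.sum_sub_distrib]

lemma finner_add_right (A B C : Matrix (Fin d) (Fin d) ℝ) :
    finner A (B + C) = finner A B + finner A C := by
  simp [finner, mul_add, Finset.sum_add_distrib]

lemma finner_one_right (A : Matrix (Fin d) (Fin d) ℝ) : finner A 1 = A.trace := by
  simp [finner, Matrix.one_apply, Matrix.trace, Matrix.diag]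

lemma fnorm_smul (c : ℝ) (A : Matrix (Fin d) (Fin d) ℝ) : fnorm (c • A) = |c| * fnorm A := by
  rw [fnorm, finner_smul_left, finner_smul_right, ← mul_assoc, Real.sqrt_mul (mul_self_nonneg c),
    Real.sqrt_mul_self_eq_abs c]; rfl

lemma finner_le (A B : Matrix (Fin d) (Fin d) ℝ) : finner A B ≤ fnorm A * fnorm B := by
  have h := Real.sum_mul_le_sqrt_mul_sqrt (Finset.univ : Finset (Fin d × Fin d))
    (fun p => A p.1 p.2) (fun p => B p.1 p.2)
  simpa [finner, fnorm, Fintype.sum_prod_type, sq] using h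

lemma trace_dev (hd : (d : ℝ) ≠ 0) (A : Matrix (Fin d) (Fin d) ℝ) : (dev A).trace = 0 := by
  simp [dev, Matrix.trace_sub, Matrix.trace_smul, Matrix.trace_one, smul_eq_mul]
  field_simp
  ring


theorem stmt_6 (hd : 2 ≤ d) (R : ℝ) (hR : 0 ≤ R)
    (A B : Matrix (Fin d) (Fin d) ℝ) (hA : A.IsSymm) (hB : B.IsSymm)
    (hAD : R < fnorm (dev A)) (hBD : fnorm (dev B) ≤ R) :
    finner (R • Phi (R⁻¹ • dev A) - dev A)
        ((Matrix.trace (A - B) / (d : ℝ)) • (1 : Matrix (Fin d) (Fin d) ℝ)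
          + R • Phi (R⁻¹ • dev A) - dev B)
      = (R - fnorm (dev A)) * (R - finner (dev A) (dev B) / fnorm (dev A))
    ∧ (R - fnorm (dev A)) * (R - finner (dev A) (dev B) / fnorm (dev A))
        ≤ (R - fnorm (dev A)) * (R - fnorm (dev B))
    ∧ (R - fnorm (dev A)) * (R - fnorm (dev B)) ≤ 0 := by
  have hd0 : (d : ℝ) ≠ 0 := by
    have : 0 < d := lt_of_lt_of_le (by norm_num) hd
    exact_mod_cast this.ne'
  set a := fnorm (dev A) with ha_def
  set b := fnorm (dev B) with hb_def
  set s := finner (dev A) (dev B) with hs_def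
  have ha : 0 < a := lt_of_le_of_lt hR hAD
  have hPhi : R • Phi (R⁻¹ • dev A) = (R / a) • dev A := by
    rcases hR.lt_or_eq with hRpos | hR0
    · have hf : fnorm (R⁻¹ • dev A) = R⁻¹ * a := by
        rw [fnorm_smul, abs_of_pos (inv_pos.2 hRpos)]
      have h1 : ¬ fnorm (R⁻¹ • dev A) ≤ 1 := by
        rw [hf, not_le, ← div_eq_inv_mul, lt_div_iff₀ hRpos, one_mul]
        exact hAD
      rw [Phi, if_neg h1, hf, smul_smul, smul_smul]
      congr 1
      field_simp
    · simp [← hR0, Phi, fnorm_smul]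
  rw [hPhi]
  have key : finner ((R / a) • dev A - dev A)
      ((Matrix.trace (A - B) / (d : ℝ)) • (1 : Matrix (Fin d) (Fin d) ℝ)
        + (R / a) • dev A - dev B)
      = (R - a) * (R - s / a) := by
    have h1 : (R / a) • dev A - dev A = (R / a - 1) • dev A := by
      rw [sub_smul, one_smul]
    rw [h1, finner_smul_left, finner_sub_right, finner_add_right, finner_smul_right,
      finner_smul_right, finner_one_right, Matrix.trace_sub]
    rw [show finner (dev A) (dev A) = a ^ 2 from (fnorm_sq (dev A)).symm]
    rw [trace_dev hd0, ← hs_def]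
    field_simp
    ring
  refine ⟨key, ?_, ?_⟩
  · have hsb : s / a ≤ b := by
      rw [div_le_iff₀ ha]
      calc s ≤ a * b := finner_le _ _
        _ = b * a := mul_comm _ _
    have hRa : R - a ≤ 0 := by linarith
    have : R - b ≤ R - s / a := by linarith
    exact mul_le_mul_of_nonpos_left this hRa
  · exact mul_nonpos_of_nonpos_of_nonneg (by linarith) (by linarith)
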